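/- Let H be a separable infinite-dimensional complex Hilbert space and let s be a function from the closed subspaces of H to the real interval [0,1]. Then s is a state if and only if s satisfies: (S1) s(⊥) = 0 and s(⊤) = 1; (S2) for every decreasing sequence (P_n) of closed subspaces (P_{n+1} ≤ P_n for all n), s(⋂_n P_n) = ⨅_n s(P_n), where ⋂_n P_n is the intersection of the P_n (itself a closed subspace); (S3) s of the topological closure of P ⊔ Q equals s(P) + s(Q) whenever P ⊥ Q. -/

import Mathlib

open scoped InnerProductSpace

noncomputable section

variable {H : Type*} [NormedAddCommGroup H] [InnerProductSpace ℂ H] [CompleteSpace H]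

/-- The type of closed subspaces of a complex inner product space `H`. -/
abbrev ClosedSubspace (H : Type*) [NormedAddCommGroup H] [InnerProductSpace ℂ H] :=
  {P : Submodule ℂ H // IsClosed (P : Set H)}

/-- The trivial closed subspace `{0}`. -/
def csBot : ClosedSubspace H :=
  ⟨⊥, by rw [Submodule.bot_coe]; exact isClosed_singleton⟩

/-- The total closed subspace `H`. -/
def csTop : ClosedSubspace H :=
  ⟨⊤, by rw [Submodule.top_coe]; exact isClosed_univ⟩

/-- Orthogonal projection onto a closed subspace, as a map `H → H`. -/
noncomputable def cproj (P : ClosedSubspace H) (x : H) : H :=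
  letI : CompleteSpace P.1 := P.2.completeSpace_coe
  (P.1.orthogonalProjectionOnto x : H)

/-- Two subspaces are orthogonal: every vector of one is orthogonal to every
vector of the other. -/
def OrthoSub (P Q : Submodule ℂ H) : Prop :=
  ∀ x ∈ P, ∀ y ∈ Q, ⟪x, y⟫_ℂ = 0

/-- A (quantum) state: a `[0,1]`-valued map on closed subspaces with `s ⊥ = 0`,
`s ⊤ = 1` which is countably additive on pairwise orthogonal families (where the
"sup" of such a family is the topological closure of the lattice supremum). -/
def IsState (s : ClosedSubspace H → ℝ) : Prop :=
  (∀ P, s P ∈ Set.Icc (0 : ℝ) 1) ∧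
  s csBot = 0 ∧ s csTop = 1 ∧
  ∀ P : ℕ → ClosedSubspace H, (∀ m n, m ≠ n → OrthoSub (P m).1 (P n).1) →
    s ⟨(⨆ n, (P n).1).topologicalClosure, Submodule.isClosed_topologicalClosure _⟩
      = ∑' n, s (P n)

/-- A (quantum) observable: a projector-valued measure on the Borel subsets of `ℝ`. -/
def IsObservable (o : {X : Set ℝ // MeasurableSet X} → ClosedSubspace H) : Prop :=
  o ⟨∅, MeasurableSet.empty⟩ = csBot ∧
  o ⟨Set.univ, MeasurableSet.univ⟩ = csTop ∧
  (∀ X : ℕ → {X : Set ℝ // MeasurableSet X},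
    o ⟨⋃ n, (X n).1, MeasurableSet.iUnion fun n => (X n).2⟩
      = ⟨(⨆ n, (o (X n)).1).topologicalClosure,
          Submodule.isClosed_topologicalClosure _⟩) ∧
  ∀ X Y : {X : Set ℝ // MeasurableSet X}, X.1 ∩ Y.1 = ∅ → OrthoSub (o X).1 (o Y).1

set_option linter.unusedSectionVars false

section AuxLemmas

open Filter Topology

lemma orthoSub_iff_le {P Q : Submodule ℂ H} : OrthoSub P Q ↔ Q ≤ Pᗮ := by
  constructor
  · intro h y hy
    exact (Submodule.mem_orthogonal P y).2 fun u hu => h u hu y hy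
  · intro h x hx y hy
    exact (Submodule.mem_orthogonal P y).1 (h hy) x hx

lemma OrthoSub.symm {P Q : Submodule ℂ H} (h : OrthoSub P Q) : OrthoSub Q P :=
  fun x hx y hy => inner_eq_zero_symm.1 (h y hy x hx)

lemma orthoSub_bot_left (Q : Submodule ℂ H) : OrthoSub (⊥ : Submodule ℂ H) Q := by
  intro x hx y hy
  rw [Submodule.mem_bot] at hx
  simp [hx]

lemma orthoSub_bot_right (Q : Submodule ℂ H) : OrthoSub Q (⊥ : Submodule ℂ H) :=
  (orthoSub_bot_left Q).symm

lemma ortho_of_le {K A B : Submodule ℂ H} (hA : A ≤ K) (hB : B ≤ Kᗮ) : OrthoSub A B :=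
  fun x hx y hy => (Submodule.mem_orthogonal K y).1 (hB hy) x (hA hx)

lemma closed_decomp {A B : Submodule ℂ H} (hA : IsClosed (A : Set H)) (hAB : A ≤ B) :
    B = A ⊔ B ⊓ Aᗮ := by
  haveI : CompleteSpace A := hA.completeSpace_coe
  refine le_antisymm (fun x hx => ?_) (sup_le hAB inf_le_left)
  have h1 : (A.orthogonalProjectionOnto x : H) ∈ A := (A.orthogonalProjectionOnto x).2
  have h2 : x - A.orthogonalProjectionOnto x ∈ B ⊓ Aᗮ :=
    ⟨B.sub_mem hx (hAB h1), A.sub_starProjection_mem_orthogonal x⟩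
  have hx' : x = (A.orthogonalProjectionOnto x : H) + (x - A.orthogonalProjectionOnto x) := by abel
  rw [hx']
  exact Submodule.add_mem_sup h1 h2

lemma closure_sup_left (A B : Submodule ℂ H) :
    (A.topologicalClosure ⊔ B).topologicalClosure = (A ⊔ B).topologicalClosure := by
  refine le_antisymm ?_
    (Submodule.topologicalClosure_mono (sup_le_sup_right A.le_topologicalClosure B))
  refine Submodule.topologicalClosure_minimal _ (sup_le ?_ ?_)
    (A ⊔ B).isClosed_topologicalClosure
  · exact Submodule.topologicalClosure_mono le_sup_left
  · exact le_trans le_sup_right (A ⊔ B).le_topologicalClosure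

lemma orthogonal_closure (A : Submodule ℂ H) : (A.topologicalClosure)ᗮ = Aᗮ := by
  rw [← Submodule.orthogonal_orthogonal_eq_closure, Submodule.triorthogonal_eq_orthogonal]


lemma cproj_mem (P : ClosedSubspace H) (x : H) : cproj P x ∈ P.1 := by
  letI : CompleteSpace P.1 := P.2.completeSpace_coe
  exact (P.1.orthogonalProjectionOnto x).2

lemma cproj_eq_self {P : ClosedSubspace H} {x : H} (h : x ∈ P.1) : cproj P x = x := by
  letI : CompleteSpace P.1 := P.2.completeSpace_coe
  exact Submodule.starProjection_eq_self_iff.2 h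

lemma sub_cproj_mem (P : ClosedSubspace H) (x : H) : x - cproj P x ∈ (P.1)ᗮ := by
  letI : CompleteSpace P.1 := P.2.completeSpace_coe
  exact Submodule.sub_starProjection_mem_orthogonal x

lemma cproj_cproj {P Q : ClosedSubspace H} (h : Q.1 ≤ P.1) (x : H) :
    cproj Q x = cproj Q (cproj P x) := by
  letI : CompleteSpace P.1 := P.2.completeSpace_coe
  letI : CompleteSpace Q.1 := Q.2.completeSpace_coe
  symm
  show (Q.1.orthogonalProjectionOnto (cproj P x) : H) = cproj Q x
  apply Submodule.eq_starProjection_of_mem_orthogonal (cproj_mem Q x)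
  have h1 : cproj P x - x ∈ (Q.1)ᗮ := by
    have := sub_cproj_mem P x
    have h2 : -(x - cproj P x) ∈ (P.1)ᗮ := neg_mem this
    rw [neg_sub] at h2
    exact Submodule.orthogonal_le h h2
  have h2 : x - cproj Q x ∈ (Q.1)ᗮ := sub_cproj_mem Q x
  have := add_mem h1 h2
  rwa [show cproj P x - x + (x - cproj Q x) = cproj P x - cproj Q x by abel] at this

lemma norm_sq_cproj (P : ClosedSubspace H) (x : H) :
    ‖x‖ ^ 2 = ‖cproj P x‖ ^ 2 + ‖x - cproj P x‖ ^ 2 := by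
  letI : CompleteSpace P.1 := P.2.completeSpace_coe
  have h := Submodule.norm_sq_eq_add_norm_sq_projection x P.1
  have h1 : ‖((P.1)ᗮ.orthogonalProjectionOnto) x‖ = ‖x - cproj P x‖ := by
    rw [show ‖((P.1)ᗮ.orthogonalProjectionOnto) x‖ = ‖(P.1)ᗮ.starProjection x‖ from rfl,
      Submodule.starProjection_orthogonal_val]
    rfl
  rw [h1] at h
  exact h

def chainPiece (P : ℕ → ClosedSubspace H) (N : ℕ) : ℕ → Submodule ℂ H
  | 0 => ⨅ n, (P n).1
  | (k+1) => (P (N+k)).1 ⊓ ((P (N+k+1)).1)ᗮ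

lemma chainPiece_isClosed (P : ℕ → ClosedSubspace H) (N k : ℕ) :
    IsClosed ((chainPiece P N k : Submodule ℂ H) : Set H) := by
  cases k with
  | zero =>
    show IsClosed ((⨅ n, (P n).1 : Submodule ℂ H) : Set H)
    rw [Submodule.coe_iInf]; exact isClosed_iInter fun n => (P n).2
  | succ k =>
    show IsClosed (((P (N+k)).1 ⊓ ((P (N+k+1)).1)ᗮ : Submodule ℂ H) : Set H)
    rw [Submodule.coe_inf]
    exact (P (N+k)).2.inter (Submodule.isClosed_orthogonal _)

lemma chain_closure (P : ℕ → ClosedSubspace H) (hdec : ∀ n, (P (n+1)).1 ≤ (P n).1) (N : ℕ) :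
    (⨆ k, chainPiece P N k).topologicalClosure = (P N).1 := by
  have hanti : ∀ m n, m ≤ n → (P n).1 ≤ (P m).1 := fun m n h =>
    antitone_nat_of_succ_le (f := fun n => (P n).1) hdec h
  refine le_antisymm ?_ ?_
  · refine Submodule.topologicalClosure_minimal _ (iSup_le fun k => ?_) (P N).2
    cases k with
    | zero => exact iInf_le (fun n => (P n).1) N
    | succ k => exact le_trans inf_le_left (hanti N (N+k) (Nat.le_add_right N k))
  · intro x hx
    set f : ℕ → H := fun M => cproj (P (N + M)) x with hfdef
    have hmem : ∀ M, f M ∈ (P (N+M)).1 := fun M => cproj_mem _ x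
    have hf0 : f 0 = x := cproj_eq_self hx
    have hff : ∀ m m', m ≤ m' → f m' = cproj (P (N+m')) (f m) := fun m m' h =>
      cproj_cproj (hanti (N+m) (N+m') (by omega)) x
    have hid : ∀ m m', m ≤ m' → ‖f m - f m'‖ ^ 2 = ‖f m‖ ^ 2 - ‖f m'‖ ^ 2 := by
      intro m m' h
      have h1 := norm_sq_cproj (P (N+m')) (f m)
      rw [← hff m m' h] at h1
      linarith
    have hantig : Antitone fun M => ‖f M‖ ^ 2 := by
      apply antitone_nat_of_succ_le
      intro M
      have := hid M (M+1) (Nat.le_succ M)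
      have h2 : (0:ℝ) ≤ ‖f M - f (M+1)‖ ^ 2 := sq_nonneg _
      show ‖f (M+1)‖ ^ 2 ≤ ‖f M‖ ^ 2
      linarith
    have hbdd : BddBelow (Set.range fun M => ‖f M‖ ^ 2) := by
      refine ⟨0, ?_⟩
      rintro y ⟨M, rfl⟩
      exact sq_nonneg _
    have hgc : CauchySeq fun M => ‖f M‖ ^ 2 :=
      (tendsto_atTop_ciInf hantig hbdd).cauchySeq
    have hfc : CauchySeq f := by
      rw [Metric.cauchySeq_iff']
      intro ε hε
      obtain ⟨K, hK⟩ := Metric.cauchySeq_iff'.1 hgc (ε ^ 2) (by positivity)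
      refine ⟨K, fun n hn => ?_⟩
      have h1 := hK n hn
      rw [Real.dist_eq] at h1
      have h2 : ‖f K - f n‖ ^ 2 = ‖f K‖ ^ 2 - ‖f n‖ ^ 2 := hid K n hn
      have h3 : ‖f K - f n‖ ^ 2 < ε ^ 2 := by
        rw [h2]
        calc ‖f K‖ ^ 2 - ‖f n‖ ^ 2 ≤ |‖f n‖ ^ 2 - ‖f K‖ ^ 2| := by
              rw [abs_sub_comm]; exact le_abs_self _
          _ < ε ^ 2 := h1
      have h4 : ‖f K - f n‖ < ε := lt_of_pow_lt_pow_left₀ 2 hε.le h3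
      rw [dist_eq_norm, ← norm_sub_rev]
      exact h4
    obtain ⟨y, hy⟩ := cauchySeq_tendsto_of_complete hfc
    have hyQ : y ∈ chainPiece P N 0 := by
      show y ∈ ⨅ n, (P n).1
      rw [Submodule.mem_iInf]
      intro n
      refine (P n).2.mem_of_tendsto hy ?_
      filter_upwards [Filter.eventually_ge_atTop n] with M hM
      exact hanti n (N+M) (by omega) (hmem M)
    have hdiff : ∀ M, x - f M ∈ ⨆ k, chainPiece P N k := by
      intro M
      induction M with
      | zero => rw [hf0, sub_self]; exact zero_mem _
      | succ M ih =>
        have h1 : f M - f (M+1) ∈ chainPiece P N (M+1) := by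
          show f M - f (M+1) ∈ (P (N+M)).1 ⊓ ((P (N+M+1)).1)ᗮ
          refine Submodule.mem_inf.2 ⟨?_, ?_⟩
          · exact sub_mem (hmem M) (hdec (N+M) (hmem (M+1)))
          · rw [hff M (M+1) (Nat.le_succ M)]
            exact sub_cproj_mem _ _
        have h2 : x - f (M+1) = (x - f M) + (f M - f (M+1)) := by abel
        rw [h2]
        exact add_mem ih (le_iSup (chainPiece P N) (M+1) h1)
    have hxy : x - y ∈ (⨆ k, chainPiece P N k).topologicalClosure := by
      rw [← SetLike.mem_coe, Submodule.topologicalClosure_coe]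
      exact mem_closure_of_tendsto (tendsto_const_nhds.sub hy)
        (Filter.Eventually.of_forall fun M => hdiff M)
    have hyc : y ∈ (⨆ k, chainPiece P N k).topologicalClosure :=
      (⨆ k, chainPiece P N k).le_topologicalClosure (le_iSup (chainPiece P N) 0 hyQ)
    have : x = y + (x - y) := by abel
    rw [this]
    exact add_mem hyc hxy

lemma state_summable {s : ClosedSubspace H → ℝ} (hrange : ∀ P, s P ∈ Set.Icc (0:ℝ) 1)
    (hbot : s csBot = 0)
    (hsig : ∀ P : ℕ → ClosedSubspace H, (∀ m n, m ≠ n → OrthoSub (P m).1 (P n).1) →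
      s ⟨(⨆ n, (P n).1).topologicalClosure, Submodule.isClosed_topologicalClosure _⟩
        = ∑' n, s (P n))
    (G : ℕ → ClosedSubspace H) (hG : ∀ m n, m ≠ n → OrthoSub (G m).1 (G n).1) :
    Summable fun n => s (G n) := by
  apply summable_of_sum_range_le (c := 1) (fun n => (hrange (G n)).1)
  intro K
  set G' : ℕ → ClosedSubspace H := fun n => if n < K then G n else csBot with hG'
  have horth : ∀ m n, m ≠ n → OrthoSub (G' m).1 (G' n).1 := by
    intro m n hmn
    by_cases hm : m < K <;> by_cases hn : n < K <;>
      simp only [hG', if_pos, if_neg, hm, hn, if_true, if_false]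
    · exact hG m n hmn
    · exact orthoSub_bot_right _
    · exact orthoSub_bot_left _
    · exact orthoSub_bot_left _
  have h1 := hsig G' horth
  have h2 : ∑' n, s (G' n) = ∑ n ∈ Finset.range K, s (G n) := by
    rw [tsum_eq_sum (s := Finset.range K)
      (fun n hn => by
        simp only [hG', if_neg (Finset.mem_range.not.1 hn)]
        exact hbot)]
    exact Finset.sum_congr rfl fun n hn => by
      simp only [hG', if_pos (Finset.mem_range.1 hn)]
  rw [← h2, ← h1]
  exact (hrange _).2

/-- Characterization of states: a `[0,1]`-valued map on the closed subspaces of a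
separable infinite-dimensional complex Hilbert space is a state iff it satisfies
(S1) `s ⊥ = 0`, `s ⊤ = 1`; (S2) `s` sends intersections of decreasing sequences to
infima; (S3) finite additivity on orthogonal pairs. -/
theorem isState_iff_S1_S2_S3 [TopologicalSpace.SeparableSpace H]
    (hinf : ¬ FiniteDimensional ℂ H)
    (s : ClosedSubspace H → ℝ) (hrange : ∀ P, s P ∈ Set.Icc (0 : ℝ) 1) :
    IsState s ↔
      ((s csBot = 0 ∧ s csTop = 1) ∧
       (∀ P : ℕ → ClosedSubspace H, (∀ n, (P (n + 1)).1 ≤ (P n).1) →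
          s ⟨⨅ n, (P n).1, by
              rw [Submodule.coe_iInf]; exact isClosed_iInter fun n => (P n).2⟩
            = ⨅ n, s (P n)) ∧
       (∀ P Q : ClosedSubspace H, OrthoSub P.1 Q.1 →
          s ⟨(P.1 ⊔ Q.1).topologicalClosure, Submodule.isClosed_topologicalClosure _⟩
            = s P + s Q)) := by
  constructor
  · rintro ⟨_, hbot, htop, hsig⟩
    refine ⟨⟨hbot, htop⟩, ?_, ?_⟩
    · -- S2
      intro P hdec
      have hanti : ∀ m n, m ≤ n → (P n).1 ≤ (P m).1 := fun m n h =>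
        antitone_nat_of_succ_le (f := fun n => (P n).1) hdec h
      have horthF : ∀ N m n, m ≠ n → OrthoSub (chainPiece P N m) (chainPiece P N n) := by
        intro N m n hmn
        have key : ∀ m n, m < n → OrthoSub (chainPiece P N m) (chainPiece P N n) := by
          intro m n h
          obtain ⟨l, rfl⟩ : ∃ l, n = l + 1 := ⟨n - 1, by omega⟩
          cases m with
          | zero =>
            refine ortho_of_le (K := (P (N+l+1)).1) ?_ ?_
            · exact iInf_le (fun n => (P n).1) (N+l+1)
            · exact inf_le_right
          | succ k =>
            refine OrthoSub.symm (ortho_of_le (K := (P (N+k+1)).1) ?_ ?_)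
            · exact le_trans inf_le_left (hanti (N+k+1) (N+l) (by omega))
            · exact inf_le_right
        rcases lt_trichotomy m n with h|h|h
        · exact key m n h
        · exact absurd h hmn
        · exact (key n m h).symm
      set F : ℕ → ℕ → ClosedSubspace H :=
        fun N k => ⟨chainPiece P N k, chainPiece_isClosed P N k⟩ with hFdef
      have hPs : ∀ N, s (P N) = ∑' k, s (F N k) := by
        intro N
        rw [← hsig (F N) (fun m n hmn => horthF N m n hmn)]
        exact congrArg s (Subtype.ext (chain_closure P hdec N).symm)
      set Qc : ClosedSubspace H := ⟨⨅ n, (P n).1, by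
        rw [Submodule.coe_iInf]; exact isClosed_iInter fun n => (P n).2⟩ with hQdef
      set c : ℕ → ℝ := fun n =>
        s ⟨(P n).1 ⊓ ((P (n+1)).1)ᗮ, by
          rw [Submodule.coe_inf]
          exact (P n).2.inter (Submodule.isClosed_orthogonal _)⟩ with hcdef
      have hsummableF : ∀ N, Summable fun k => s (F N k) := fun N =>
        state_summable hrange hbot hsig (F N) (fun m n hmn => horthF N m n hmn)
      have hFsucc : ∀ N k, s (F N (k+1)) = c (N + k) := fun N k => rfl
      have hF0 : ∀ N, s (F N 0) = s Qc := fun N => rfl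
      have hkey : ∀ N, s (P N) = s Qc + ∑' k, c (N + k) := by
        intro N
        rw [hPs N, (hsummableF N).tsum_eq_zero_add, hF0 N]
        congr 1
      have hnn : ∀ N, (0:ℝ) ≤ ∑' k, c (N + k) := fun N =>
        tsum_nonneg fun k => (hrange _).1
      have htt : Tendsto (fun N => s (P N)) atTop (nhds (s Qc)) := by
        have h0 : Tendsto (fun N => ∑' k, c (N + k)) atTop (nhds 0) :=
          (tendsto_sum_nat_add c).congr fun N => tsum_congr fun k => by rw [Nat.add_comm]
        have h1 := (tendsto_const_nhds (x := s Qc) (f := Filter.atTop (α := ℕ))).add h0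
        rw [add_zero] at h1
        exact h1.congr fun N => (hkey N).symm
      show s Qc = ⨅ n, s (P n)
      apply le_antisymm
      · exact le_ciInf fun N => by rw [hkey N]; exact le_add_of_nonneg_right (hnn N)
      · refine ge_of_tendsto htt (Filter.Eventually.of_forall fun N => ?_)
        exact ciInf_le ⟨0, by rintro y ⟨N, rfl⟩; exact (hrange _).1⟩ N
    · -- S3
      intro Pc Quc hpq
      set G : ℕ → ClosedSubspace H :=
        fun n => if n = 0 then Pc else if n = 1 then Quc else csBot with hGdef
      have g0 : G 0 = Pc := by simp [hGdef]
      have g1 : G 1 = Quc := by simp [hGdef]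
      have g2 : ∀ k, G (k+2) = csBot := fun k => by simp [hGdef]
      have horth : ∀ m n, m ≠ n → OrthoSub (G m).1 (G n).1 := by
        intro m n hmn
        rcases m with _|(_|m) <;> rcases n with _|(_|n)
        · exact absurd rfl hmn
        · rw [g0, g1]; exact hpq
        · rw [g0, g2]; exact orthoSub_bot_right _
        · rw [g1, g0]; exact hpq.symm
        · exact absurd rfl hmn
        · rw [g1, g2]; exact orthoSub_bot_right _
        · rw [g2, g0]; exact orthoSub_bot_left _
        · rw [g2, g1]; exact orthoSub_bot_left _
        · rw [g2, g2]; exact orthoSub_bot_left _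
      have hsup : (⨆ n, (G n).1) = Pc.1 ⊔ Quc.1 := by
        apply le_antisymm
        · apply iSup_le
          intro n
          rcases n with _|(_|n)
          · rw [g0]; exact le_sup_left
          · rw [g1]; exact le_sup_right
          · rw [g2]; exact bot_le
        · refine sup_le ?_ ?_
          · rw [← g0]; exact le_iSup (fun n => (G n).1) 0
          · rw [← g1]; exact le_iSup (fun n => (G n).1) 1
      have h1 := hsig G horth
      have h2 : s (⟨(Pc.1 ⊔ Quc.1).topologicalClosure,
          Submodule.isClosed_topologicalClosure _⟩ : ClosedSubspace H) = ∑' n, s (G n) := by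
        rw [← h1]
        exact congrArg s (Subtype.ext (congrArg Submodule.topologicalClosure hsup.symm))
      rw [h2, tsum_eq_sum (s := ({0, 1} : Finset ℕ)) ?side]
      · rw [Finset.sum_pair (by norm_num : (0:ℕ) ≠ 1), g0, g1]
      case side =>
        intro n hn
        rcases n with _|(_|n)
        · simp at hn
        · simp at hn
        · rw [g2]; exact hbot
  · rintro ⟨⟨hbot, htop⟩, hS2, hS3⟩
    refine ⟨hrange, hbot, htop, ?_⟩
    intro P horth
    set V : ℕ → Submodule ℂ H := fun N => (Finset.range N).sup (fun n => (P n).1) with hVdef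
    have hVmono : Monotone V := fun a b h => Finset.sup_mono (Finset.range_subset_range.2 h)
    set S : ℕ → ClosedSubspace H := fun N =>
      ⟨(V N).topologicalClosure, Submodule.isClosed_topologicalClosure _⟩ with hSdef
    set T : ClosedSubspace H :=
      ⟨(⨆ n, (P n).1).topologicalClosure, Submodule.isClosed_topologicalClosure _⟩ with hTdef
    have hVle : ∀ N, V N ≤ ⨆ n, (P n).1 := fun N =>
      Finset.sup_le fun n _ => le_iSup (fun n => (P n).1) n
    have hST : ∀ N, (S N).1 ≤ T.1 := fun N => Submodule.topologicalClosure_mono (hVle N)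
    have hSA : ∀ N, s (S N) = ∑ n ∈ Finset.range N, s (P n) := by
      intro N
      induction N with
      | zero =>
        have hb : S 0 = csBot := by
          refine Subtype.ext ?_
          show (V 0).topologicalClosure = ⊥
          rw [hVdef]
          simp only [Finset.range_zero, Finset.sup_empty]
          exact le_antisymm
            (Submodule.topologicalClosure_minimal _ le_rfl (by
              rw [Submodule.bot_coe]; exact isClosed_singleton))
            (Submodule.le_topologicalClosure _)
        rw [hb, hbot, Finset.range_zero, Finset.sum_empty]
      | succ N ih =>
        have horthSN : OrthoSub (S N).1 (P N).1 := by
          have hle : V N ≤ ((P N).1)ᗮ := Finset.sup_le fun n hn =>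
            orthoSub_iff_le.1 (horth N n (Finset.mem_range.1 hn).ne')
          have : (S N).1 ≤ ((P N).1)ᗮ :=
            Submodule.topologicalClosure_minimal _ hle (Submodule.isClosed_orthogonal _)
          exact (orthoSub_iff_le.2 this).symm
        have h3 := hS3 (S N) (P N) horthSN
        have heq : ((S N).1 ⊔ (P N).1).topologicalClosure = (V (N+1)).topologicalClosure := by
          show ((V N).topologicalClosure ⊔ (P N).1).topologicalClosure = _
          rw [closure_sup_left]
          congr 1
          rw [hVdef]
          simp only [Finset.range_add_one, Finset.sup_insert]
          rw [sup_comm]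
        have h4 : s (S (N+1)) = s (S N) + s (P N) := by
          rw [← h3]
          exact congrArg s (Subtype.ext heq.symm)
        rw [h4, ih, Finset.sum_range_succ]
    set R : ℕ → ClosedSubspace H := fun N =>
      ⟨T.1 ⊓ ((S N).1)ᗮ, by
        rw [Submodule.coe_inf]
        exact T.2.inter (Submodule.isClosed_orthogonal _)⟩ with hRdef
    have hRdec : ∀ N, (R (N+1)).1 ≤ (R N).1 := fun N =>
      inf_le_inf_left _ (Submodule.orthogonal_le
        (Submodule.topologicalClosure_mono (hVmono (Nat.le_succ N))))
    have hIinf : (⨅ N, ((S N).1)ᗮ) = (T.1)ᗮ := by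
      rw [Submodule.iInf_orthogonal]
      apply le_antisymm
      · have h2 : (⨆ n, (P n).1) ≤ ⨆ N, (S N).1 := by
          refine iSup_le fun n => ?_
          have : (P n).1 ≤ V (n+1) :=
            Finset.le_sup (f := fun n => (P n).1) (Finset.self_mem_range_succ n)
          exact le_trans (le_trans this (Submodule.le_topologicalClosure _))
            (le_iSup (fun N => (S N).1) (n+1))
        have := Submodule.orthogonal_le h2
        rwa [hTdef, orthogonal_closure]
      · exact Submodule.orthogonal_le (iSup_le hST)
    have hinf_bot : (⨅ N, (R N).1) = ⊥ := by
      have h1 : (⨅ N, (R N).1) = T.1 ⊓ ⨅ N, ((S N).1)ᗮ := (inf_iInf).symm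
      rw [h1, hIinf, Submodule.inf_orthogonal_eq_bot]
    have hz : (⨅ N, s (R N)) = 0 := by
      rw [← hS2 R hRdec]
      exact (congrArg s (Subtype.ext hinf_bot)).trans hbot
    have hTN : ∀ N, s T = s (S N) + s (R N) := by
      intro N
      rw [← hS3 (S N) (R N) (orthoSub_iff_le.2 inf_le_right)]
      refine congrArg s (Subtype.ext ?_)
      show T.1 = ((S N).1 ⊔ (R N).1).topologicalClosure
      rw [show (S N).1 ⊔ (R N).1 = T.1 from (closed_decomp (S N).2 (hST N)).symm]
      exact (T.2.submodule_topologicalClosure_eq).symm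
    have hsum : Summable fun n => s (P n) :=
      summable_of_sum_range_le (fun n => (hrange _).1)
        (fun N => by rw [← hSA N]; exact (hrange _).2)
    have hmonoS : Monotone fun N => s (S N) := by
      intro a b h
      simp only [hSA]
      exact Finset.sum_le_sum_of_subset_of_nonneg (Finset.range_subset_range.2 h)
        (fun i _ _ => (hrange _).1)
    have hRanti : Antitone fun N => s (R N) := by
      intro a b h
      have h1 := hTN a
      have h2 := hTN b
      have := hmonoS h
      simp only [] at this ⊢
      linarith
    have hRtend : Tendsto (fun N => s (R N)) atTop (nhds 0) := by
      have := tendsto_atTop_ciInf hRanti ⟨0, by rintro y ⟨N, rfl⟩; exact (hrange _).1⟩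
      rwa [hz] at this
    have hStend : Tendsto (fun N => s (S N)) atTop (nhds (s T)) := by
      have h1 := (tendsto_const_nhds (x := s T) (f := Filter.atTop (α := ℕ))).sub hRtend
      rw [sub_zero] at h1
      exact h1.congr fun N => by have := hTN N; linarith
    have hsumtend : Tendsto (fun N => ∑ n ∈ Finset.range N, s (P n)) atTop
        (nhds (∑' n, s (P n))) := hsum.hasSum.tendsto_sum_nat
    have : s T = ∑' n, s (P n) :=
      tendsto_nhds_unique (hStend.congr fun N => hSA N) hsumtend
    exact this
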